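/- If a convex body K in ℝⁿ forms a k-fold translative tiling of ℝⁿ for some positive integer k, then K is a polytope. -/

import Mathlib

open Set Metric Filter
set_option linter.unusedSectionVars false
set_option linter.unusedVariables false
set_option maxHeartbeats 1600000

section Aux
variable {E : Type*} [NormedAddCommGroup E] [NormedSpace ℝ E]

lemma aux_interior_union_empty {s t : Set E} (hs : IsClosed s)
    (hsi : interior s = ∅) (hti : interior t = ∅) :
    interior (s ∪ t) = ∅ := by
  have h1 : interior (s ∪ t) \ s ⊆ interior t := by
    refine interior_maximal ?_ (isOpen_interior.sdiff hs)
    intro y hy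
    rcases interior_subset hy.1 with h | h
    · exact absurd h hy.2
    · exact h
  have h2 : interior (s ∪ t) ⊆ s := by
    intro x hx
    by_contra hxs
    have := h1 ⟨hx, hxs⟩
    simp [hti] at this
  have := interior_maximal h2 isOpen_interior
  rw [hsi] at this
  exact eq_empty_of_subset_empty this

lemma aux_interior_biUnion_empty {ι : Type*} (S : Finset ι) (g : ι → Set E)
    (hc : ∀ i ∈ S, IsClosed (g i)) (hi : ∀ i ∈ S, interior (g i) = ∅) :
    interior (⋃ i ∈ S, g i) = ∅ := by
  classical
  induction S using Finset.induction with
  | empty => simp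
  | insert _ _ hnot ih =>
    rename_i a s
    rw [Finset.set_biUnion_insert]
    exact aux_interior_union_empty (hc a (Finset.mem_insert_self a s))
      (hi a (Finset.mem_insert_self a s))
      (ih (fun i hi' => hc i (Finset.mem_insert_of_mem hi'))
          (fun i hi' => hi i (Finset.mem_insert_of_mem hi')))

/-- A nonempty open set is not contained in a finite union of closed sets with
empty interior; indeed we can find a point of the open set outside the union. -/
lemma aux_open_sub_biUnion_nonempty {ι : Type*} {U : Set E} (hU : IsOpen U)
    (hne : U.Nonempty) (S : Finset ι) (g : ι → Set E)
    (hc : ∀ i ∈ S, IsClosed (g i)) (hi : ∀ i ∈ S, interior (g i) = ∅) :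
    (U \ ⋃ i ∈ S, g i).Nonempty := by
  rw [nonempty_iff_ne_empty]
  intro h
  have hsub : U ⊆ ⋃ i ∈ S, g i := by
    intro x hx
    by_contra hx2
    exact absurd (Set.eq_empty_iff_forall_notMem.1 h x) (by simp [hx, hx2])
  have := interior_maximal hsub hU
  rw [aux_interior_biUnion_empty S g hc hi] at this
  exact absurd (this hne.choose_spec) (notMem_empty _)

/-- A level set of a nonzero continuous linear functional has empty interior. -/
lemma aux_interior_levelset_empty (f : E →L[ℝ] ℝ) (hf : f ≠ 0) (c : ℝ) :
    interior {y : E | f y = c} = ∅ := by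
  rw [eq_empty_iff_forall_notMem]
  intro x hx
  obtain ⟨ε, hε, hball⟩ := Metric.mem_nhds_iff.1 (mem_interior_iff_mem_nhds.1 hx)
  obtain ⟨v, hv⟩ : ∃ v : E, f v ≠ 0 := by
    by_contra h
    push_neg at h
    exact hf (by ext y; simp [h y])
  have hvn : v ≠ 0 := by rintro rfl; simp at hv
  have hnv : (0:ℝ) < ‖v‖ := norm_pos_iff.2 hvn
  set t : ℝ := ε / (2 * ‖v‖)
  have ht : 0 < t := div_pos hε (by positivity)
  have hmem : x + t • v ∈ ball x ε := by
    simp only [mem_ball, dist_self_add_left, norm_smul, Real.norm_eq_abs,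
      abs_of_pos ht]
    rw [div_mul_eq_mul_div, mul_comm]
    rw [div_lt_iff₀ (by positivity : (0:ℝ) < 2 * ‖v‖)]
    nlinarith [hnv, hε]
  have h1 : f (x + t • v) = c := hball hmem
  have h2 : f x = c := by simpa using (interior_subset hx : x ∈ {y : E | f y = c})
  simp only [map_add, map_smul, h2, smul_eq_mul] at h1
  have : t * f v = 0 := by linarith
  rcases mul_eq_zero.1 this with h | h
  · exact absurd h ht.ne'
  · exact hv h

/-- Positive finite minimum helper. -/
lemma aux_finset_pos_min {ι : Type*} (S : Finset ι) (g : ι → ℝ)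
    (h : ∀ i ∈ S, 0 < g i) : ∃ δ : ℝ, 0 < δ ∧ ∀ i ∈ S, δ ≤ g i := by
  classical
  induction S using Finset.induction with
  | empty => exact ⟨1, one_pos, by simp⟩
  | insert _ _ hnot ih =>
    rename_i a s
    obtain ⟨δ, hδ, hle⟩ := ih (fun i hi => h i (Finset.mem_insert_of_mem hi))
    refine ⟨min δ (g a), lt_min hδ (h a (Finset.mem_insert_self a s)), ?_⟩
    intro i hi
    rcases Finset.mem_insert.1 hi with rfl | hi
    · exact min_le_right _ _
    · exact le_trans (min_le_left _ _) (hle i hi)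


lemma aux_closure_interior {A : Set E} (hA : Convex ℝ A) (hcl : IsClosed A)
    (hne : (interior A).Nonempty) : closure (interior A) = A := by
  obtain ⟨x, hx⟩ := hne
  refine subset_antisymm ((closure_mono interior_subset).trans hcl.closure_eq.subset) ?_
  intro y hy
  have hmem : ∀ m : ℕ, (1 / (m + 1) : ℝ) • x + (1 - 1 / (m + 1) : ℝ) • y ∈ interior A := by
    intro m
    have h1 : (0:ℝ) < 1 / (m + 1) := by positivity
    have h2 : (1 / ((m:ℝ) + 1)) ≤ 1 := by
      rw [div_le_one (by positivity)]; linarith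
    exact hA.combo_interior_closure_mem_interior hx (subset_closure hy) h1
      (by linarith) (by ring)
  have h0 : Filter.Tendsto (fun m : ℕ => (1 / (m + 1) : ℝ)) atTop (nhds 0) :=
    tendsto_one_div_add_atTop_nhds_zero_nat
  have hto : Filter.Tendsto
      (fun m : ℕ => (1 / (m + 1) : ℝ) • x + (1 - 1 / (m + 1) : ℝ) • y) atTop (nhds y) := by
    have := ((h0.smul_const x).add (((tendsto_const_nhds : Filter.Tendsto (fun _ : ℕ => (1:ℝ)) atTop (nhds 1)).sub h0).smul_const y))
    simpa using this
  exact mem_closure_of_tendsto hto (Filter.Eventually.of_forall hmem)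


theorem aux_polytope [FiniteDimensional ℝ E] {A : Set E} (hA : Convex ℝ A)
    (hAc : IsCompact A) (hAi : (interior A).Nonempty)
    {ι : Type*} (S : Finset ι) (f : ι → E →L[ℝ] ℝ) (c : ι → ℝ)
    (hf : ∀ i ∈ S, f i ≠ 0)
    (hclA : closure (interior A) = A)
    (hcov : frontier A ⊆ ⋃ i ∈ S, {y | f i y = c i}) :
    ∃ V : Finset E, A = convexHull ℝ ↑V := by
  classical
  have hclosed : IsClosed A := hAc.isClosed
  have hcl2 : ∀ i ∈ S, IsClosed {y : E | f i y = c i} := fun i _ =>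
    isClosed_eq (f i).continuous continuous_const
  have hint2 : ∀ i ∈ S, interior {y : E | f i y = c i} = ∅ := fun i hi =>
    aux_interior_levelset_empty (f i) (hf i hi) (c i)
  have claimstar : ∀ e ∈ A, ∀ d : E, (∀ i ∈ S, f i e = c i → f i d = 0) →
      ∃ t : ℝ, 0 < t ∧ e + t • d ∈ A ∧ e - t • d ∈ A := by
    intro e he d hd
    obtain ⟨t, ht, htle⟩ := aux_finset_pos_min S
      (fun i => if f i e = c i then 1 else |f i e - c i| / (4 * (|f i d| + 1)))
      (by
        intro i hi
        by_cases h : f i e = c i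
        · simp [h]
        · have h0 : 0 < |f i e - c i| := abs_pos.2 (sub_ne_zero.2 h)
          have : 0 < |f i e - c i| / (4 * (|f i d| + 1)) := by positivity
          simpa [h] using this)
    set O : Set E := ⋂ i ∈ S.filter (fun i => ¬ (f i e = c i)),
      {z : E | |f i z - f i e| < |f i e - c i| / 2} with hO
    have hOopen : IsOpen O := by
      refine isOpen_biInter_finset (fun i _ => ?_)
      exact isOpen_lt ((f i).continuous.sub continuous_const).abs continuous_const
    have hOe : e ∈ O := by
      refine mem_biInter (fun i hi => ?_)
      have hne := (Finset.mem_filter.1 hi).2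
      have h0 : 0 < |f i e - c i| := abs_pos.2 (sub_ne_zero.2 fun h => hne (by simp [h]))
      simp only [mem_setOf_eq, sub_self, abs_zero]
      positivity
    have heC : e ∈ closure (interior A) := hclA.symm ▸ he
    obtain ⟨z0, hz0O, hz0int⟩ := _root_.mem_closure_iff.1 heC O hOopen hOe
    obtain ⟨w, hwU, hwH⟩ := aux_open_sub_biUnion_nonempty (hOopen.inter isOpen_interior)
      ⟨z0, hz0O, hz0int⟩ S (fun i => {y : E | f i y = c i}) hcl2 hint2
    have hwO : w ∈ O := hwU.1
    have hwint : w ∈ interior A := hwU.2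
    have hwne : ∀ i ∈ S, f i w ≠ c i := by
      intro i hi h
      exact hwH (by simp only [mem_iUnion, mem_setOf_eq]; exact ⟨i, hi, h⟩)
    set C : Set E := {y | ∀ i ∈ S, 0 < (f i w - c i) * (f i y - c i)} with hC
    have hwCmem : w ∈ C := fun i hi => mul_self_pos.2 (sub_ne_zero.2 (hwne i hi))
    have hCopen : IsOpen C := by
      have : C = ⋂ i ∈ S, {y : E | 0 < (f i w - c i) * (f i y - c i)} := by
        ext y; simp [hC, mem_iInter]
      rw [this]
      exact isOpen_biInter_finset fun i _ =>
        isOpen_lt continuous_const (continuous_const.mul ((f i).continuous.sub continuous_const))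
    have hCconv : Convex ℝ C := by
      intro y₁ h₁ y₂ h₂ a b ha hb hab
      intro i hi
      have e₁ := h₁ i hi
      have e₂ := h₂ i hi
      have hval : f i (a • y₁ + b • y₂) - c i = a * (f i y₁ - c i) + b * (f i y₂ - c i) := by
        have hfa : f i (a • y₁ + b • y₂) = a * f i y₁ + b * f i y₂ := by
          simp [map_add, map_smul, smul_eq_mul]
        rw [hfa]; linear_combination (c i) * hab
      rw [hval, mul_add]
      rcases eq_or_lt_of_le ha with h | h
      · have hb1 : b = 1 := by linarith
        rw [← h, hb1]; simpa using e₂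
      · have t1 : 0 < a * ((f i w - c i) * (f i y₁ - c i)) := mul_pos h e₁
        have t2 : 0 ≤ b * ((f i w - c i) * (f i y₂ - c i)) := mul_nonneg hb e₂.le
        nlinarith
    have hCA : C ⊆ A := by
      by_contra hsub
      obtain ⟨y, hyC, hyA⟩ := not_subset.1 hsub
      have hsub2 : C ⊆ interior A ∪ Aᶜ := by
        intro z hz
        by_cases hzA : z ∈ A
        · left
          by_contra hzint
          have hzf : z ∈ frontier A := by
            rw [hclosed.frontier_eq]; exact ⟨hzA, hzint⟩
          obtain ⟨i, hiS, hieq⟩ : ∃ i ∈ S, f i z = c i := by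
            simpa using hcov hzf
          have := hz i hiS
          rw [hieq] at this
          simp at this
        · right; exact hzA
      obtain ⟨p, hpC, hpint, hpc⟩ := hCconv.isPreconnected (interior A) Aᶜ isOpen_interior
        hclosed.isOpen_compl hsub2 ⟨w, hwCmem, hwint⟩ ⟨y, hyC, hyA⟩
      exact hpc (interior_subset hpint)
    have hkey : ∀ z : E, (∀ i ∈ S, f i e = c i → f i z = c i) →
        (∀ i ∈ S, ¬ (f i e = c i) → |f i z - f i e| ≤ |f i e - c i| / 4) → z ∈ A := by
      intro z hz1 hz2
      have hmem : ∀ m : ℕ, z + (1/(m+1) : ℝ) • (w - z) ∈ C := by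
        intro m i hi
        have hμpos : (0:ℝ) < 1/(m+1) := by positivity
        have hμle : (1/((m:ℝ)+1)) ≤ 1 := by
          rw [div_le_one (by positivity)]; linarith
        have hval : f i (z + (1/(m+1):ℝ) • (w - z)) - c i
            = (1 - 1/(m+1)) * (f i z - c i) + (1/(m+1)) * (f i w - c i) := by
          have : f i (z + (1/(m+1):ℝ) • (w - z)) = f i z + (1/(m+1)) * (f i w - f i z) := by
            simp [map_add, map_smul, map_sub, smul_eq_mul]
          rw [this]; ring
        rw [hval]
        by_cases hact : f i e = c i
        · rw [hz1 i hi hact]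
          have hwne' : f i w - c i ≠ 0 := sub_ne_zero.2 (hwne i hi)
          have := mul_self_pos.2 hwne'
          nlinarith
        · have hα : f i e - c i ≠ 0 := sub_ne_zero.2 hact
          have h1 : |f i w - f i e| < |f i e - c i| / 2 :=
            (mem_iInter₂.1 hwO) i (Finset.mem_filter.2 ⟨hi, hact⟩)
          have h2 := hz2 i hi hact
          have hueq : f i w - f i e = (f i w - c i) - (f i e - c i) := by ring
          have hveq : f i z - f i e = (f i z - c i) - (f i e - c i) := by ring
          rw [hueq] at h1
          rw [hveq] at h2
          obtain ⟨h1a, h1b⟩ := abs_lt.1 h1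
          obtain ⟨h2a, h2b⟩ := abs_le.1 h2
          rcases hα.lt_or_gt with hneg | hpos
          · rw [abs_of_neg hneg] at h1a h1b h2a h2b
            have hu : f i w - c i < (f i e - c i)/2 := by linarith
            have hv : f i z - c i ≤ (3/4) * (f i e - c i) := by linarith
            have hinner : (1 - 1/(m+1)) * (f i z - c i) + (1/(m+1)) * (f i w - c i) < 0 := by
              have t1 : (1 - 1/((m:ℝ)+1)) * (f i z - c i) ≤ 0 :=
                mul_nonpos_of_nonneg_of_nonpos (by linarith) (by nlinarith)
              have t2 : (1/((m:ℝ)+1)) * (f i w - c i) < 0 :=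
                mul_neg_of_pos_of_neg hμpos (by nlinarith)
              linarith
            exact mul_pos_of_neg_of_neg (by nlinarith) hinner
          · rw [abs_of_pos hpos] at h1a h1b h2a h2b
            have hu : (f i e - c i)/2 < f i w - c i := by linarith
            have hv : (3/4) * (f i e - c i) ≤ f i z - c i := by linarith
            have hinner : 0 < (1 - 1/(m+1)) * (f i z - c i) + (1/(m+1)) * (f i w - c i) := by
              have t1 : 0 ≤ (1 - 1/((m:ℝ)+1)) * (f i z - c i) :=
                mul_nonneg (by linarith) (by nlinarith)
              have t2 : 0 < (1/((m:ℝ)+1)) * (f i w - c i) :=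
                mul_pos hμpos (by nlinarith)
              linarith
            exact mul_pos (by nlinarith) hinner
      have hto : Tendsto (fun m : ℕ => z + (1/(m+1):ℝ) • (w - z)) atTop (nhds z) := by
        have := (tendsto_const_nhds : Tendsto (fun _ : ℕ => z) atTop (nhds z)).add
          ((tendsto_one_div_add_atTop_nhds_zero_nat (𝕜 := ℝ)).smul_const (w - z))
        simpa using this
      have hzc : z ∈ closure C := mem_closure_of_tendsto hto (Eventually.of_forall hmem)
      exact (closure_minimal hCA hclosed) hzc
    refine ⟨t, ht, ?_, ?_⟩
    · refine hkey _ (fun i hi hact => ?_) (fun i hi hact => ?_)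
      · simp [map_add, map_smul, smul_eq_mul, hd i hi hact, hact]
      · have hb := htle i hi
        rw [if_neg hact] at hb
        have h4 : t * (4 * (|f i d| + 1)) ≤ |f i e - c i| :=
          (le_div_iff₀ (by positivity)).1 hb
        have : f i (e + t • d) - f i e = t * f i d := by
          simp [map_add, map_smul, smul_eq_mul]
        rw [this, abs_mul, abs_of_pos ht]
        nlinarith [abs_nonneg (f i d), ht]
    · refine hkey _ (fun i hi hact => ?_) (fun i hi hact => ?_)
      · simp [map_sub, map_smul, smul_eq_mul, hd i hi hact, hact]
      · have hb := htle i hi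
        rw [if_neg hact] at hb
        have h4 : t * (4 * (|f i d| + 1)) ≤ |f i e - c i| :=
          (le_div_iff₀ (by positivity)).1 hb
        have : f i (e - t • d) - f i e = -(t * f i d) := by
          simp [map_sub, map_smul, smul_eq_mul]
        rw [this, abs_neg, abs_mul, abs_of_pos ht]
        nlinarith [abs_nonneg (f i d), ht]
  -- extreme points are finite
  have hext : (A.extremePoints ℝ).Finite := by
    have himg : ((fun e => {i | i ∈ S ∧ f i e = c i}) '' (A.extremePoints ℝ)).Finite := by
      refine Set.Finite.subset (S.finite_toSet.finite_subsets) ?_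
      rintro _ ⟨e, _, rfl⟩
      intro i hi
      exact hi.1
    refine Set.Finite.of_finite_image himg ?_
    intro e he e' he' heq
    have hd : ∀ i ∈ S, f i e = c i → f i (e' - e) = 0 := by
      intro i hiS hie
      have heq' : {i | i ∈ S ∧ f i e = c i} = {i | i ∈ S ∧ f i e' = c i} := heq
      have hmem : i ∈ {i | i ∈ S ∧ f i e = c i} := ⟨hiS, hie⟩
      rw [heq'] at hmem
      have hie' : f i e' = c i := hmem.2
      simp [map_sub, hie, hie']
    obtain ⟨t, ht, h1, h2⟩ := claimstar e ((mem_extremePoints.1 he).1) (e' - e) hd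
    obtain ⟨heA, hexx⟩ := mem_extremePoints.1 he
    have hseg : e ∈ openSegment ℝ (e - t • (e' - e)) (e + t • (e' - e)) := by
      refine ⟨1/2, 1/2, by norm_num, by norm_num, by norm_num, ?_⟩
      module
    have h3 := (hexx _ h2 _ h1 hseg).2
    have h4 : t • (e' - e) = 0 := by
      have := congrArg (fun y => y - e) h3
      simpa [add_sub_cancel_left] using this
    have h5 : e' - e = 0 := by
      rcases smul_eq_zero.1 h4 with h | h
      · exact absurd h ht.ne'
      · exact h
    have := sub_eq_zero.1 h5
    exact this.symm
  -- Krein-Milman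
  have hKM := closure_convexHull_extremePoints hAc hA
  refine ⟨hext.toFinset, ?_⟩
  rw [Set.Finite.coe_toFinset]
  conv_lhs => rw [← hKM]
  exact (hext.isClosed_convexHull (𝕜 := ℝ)).closure_eq


lemma aux_interior_frontier_closed {s : Set E} (hs : IsClosed s) :
    interior (frontier s) = ∅ := by
  rw [eq_empty_iff_forall_notMem]
  intro x hx
  have h1 : interior (frontier s) ⊆ s := (interior_subset).trans (hs.frontier_subset)
  have h2 : interior (frontier s) ⊆ interior s := interior_maximal h1 isOpen_interior
  have h3 : x ∈ frontier s := interior_subset hx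
  rw [hs.frontier_eq] at h3
  exact h3.2 (h2 hx)


end Aux

/-- `K + X` is a `k`-fold tiling of `ℝⁿ`. -/
def IsKFoldTilingN (n : ℕ) (K X : Set (Fin n → ℝ)) (k : ℕ) : Prop :=
  (∀ y, ∃ S : Finset (Fin n → ℝ), ↑S ⊆ {x ∈ X | y - x ∈ K} ∧ k ≤ S.card) ∧
  (∀ y, ∀ S : Finset (Fin n → ℝ), ↑S ⊆ {x ∈ X | y - x ∈ interior K} → S.card ≤ k)

/-- If a convex body forms a `k`-fold translative tiling of `ℝⁿ`, then it is a polytope. -/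
theorem multiple_translative_tile_is_polytope (n : ℕ) (K : Set (Fin n → ℝ))
    (hconv : Convex ℝ K) (hcomp : IsCompact K) (hint : (interior K).Nonempty)
    (k : ℕ) (hk : 0 < k) (X : Set (Fin n → ℝ))
    (hdisc : ∀ R : ℝ, {x ∈ X | ‖x‖ ≤ R}.Finite)
    (htile : IsKFoldTilingN n K X k) :
    ∃ V : Finset (Fin n → ℝ), K = convexHull ℝ ↑V := by
  classical
  obtain ⟨h1, h2⟩ := htile
  have hKclosed : IsClosed K := hcomp.isClosed
  obtain ⟨w0, hw0⟩ := hint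
  have hKne : K.Nonempty := ⟨w0, interior_subset hw0⟩
  obtain ⟨k0, hk0⟩ := hKne
  obtain ⟨RK, hRK⟩ : ∃ R : ℝ, ∀ y ∈ K, ‖y‖ ≤ R :=
    isBounded_iff_forall_norm_le.1 hcomp.isBounded
  have hRK0 : 0 ≤ RK := le_trans (norm_nonneg k0) (hRK k0 hk0)
  -- a base translate
  obtain ⟨S0, hS0sub, hS0card⟩ := h1 0
  obtain ⟨a, haS0⟩ := Finset.card_pos.1 (lt_of_lt_of_le hk hS0card)
  have haX : a ∈ X := (hS0sub haS0).1
  -- translates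
  set T : (Fin n → ℝ) → Set (Fin n → ℝ) := fun x => {y | y - x ∈ K} with hT
  have hTclosed : ∀ x, IsClosed (T x) :=
    fun x => hKclosed.preimage (continuous_id.sub continuous_const)
  have hTne : ∀ x, (T x).Nonempty := fun x => ⟨k0 + x, by simp [hT, hk0]⟩
  have hTint : ∀ x, interior (T x) = {y | y - x ∈ interior K} := by
    intro x
    have : T x = (Homeomorph.subRight x) ⁻¹' K := rfl
    rw [this, ← Homeomorph.preimage_interior]
    rfl
  have hTfr : ∀ x, frontier (T x) = {y | y - x ∈ frontier K} := by
    intro x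
    have : T x = (Homeomorph.subRight x) ⁻¹' K := rfl
    rw [this, ← Homeomorph.preimage_frontier]
    rfl
  have hTconv : ∀ x, Convex ℝ (T x) := by
    intro x y₁ h₁ y₂ h₂ s t hs ht hst
    have h₁' : y₁ - x ∈ K := h₁
    have h₂' : y₂ - x ∈ K := h₂
    have hh := hconv h₁' h₂' hs ht hst
    have heq : s • y₁ + t • y₂ - x = s • (y₁ - x) + t • (y₂ - x) := by
      have h1' : s • (y₁ - x) + t • (y₂ - x) = s • y₁ + t • y₂ - (s + t) • x := by
        module
      rw [h1', hst, one_smul]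
    show s • y₁ + t • y₂ - x ∈ K
    rw [heq]
    exact hh
  have hTcompact : ∀ x, IsCompact (T x) := by
    intro x
    have himg : T x = (fun y => y + x) '' K := by
      ext y
      constructor
      · intro hy
        exact ⟨y - x, hy, by simp⟩
      · rintro ⟨u, hu, rfl⟩
        show u + x - x ∈ K
        simpa using hu
    rw [himg]
    exact hcomp.image (continuous_id.add continuous_const)
  have hTintne : ∀ x, (interior (T x)).Nonempty := by
    intro x
    refine ⟨w0 + x, ?_⟩
    rw [hTint]
    show w0 + x - x ∈ interior K
    simpa using hw0
  have hclT : ∀ x, closure (interior (T x)) = T x :=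
    fun x => aux_closure_interior (hTconv x) (hTclosed x) (hTintne x)
  -- covering
  have hcovering : ∀ y : Fin n → ℝ, ∃ x ∈ X, y ∈ T x := by
    intro y
    obtain ⟨S', hS'sub, hS'card⟩ := h1 y
    obtain ⟨x, hx⟩ := Finset.card_pos.1 (lt_of_lt_of_le hk hS'card)
    exact ⟨x, (hS'sub hx).1, (hS'sub hx).2⟩
  -- local finiteness
  have hlocfin : ∀ (p : Fin n → ℝ) (R : ℝ), 0 ≤ R → {x ∈ X | (T x ∩ ball p R).Nonempty}.Finite := by
    intro p R hR
    refine (hdisc (‖p‖ + R + RK)).subset ?_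
    rintro x ⟨hxX, y, hyT, hyb⟩
    refine ⟨hxX, ?_⟩
    have h1' : ‖y - x‖ ≤ RK := hRK _ hyT
    have h2' : ‖y - p‖ < R := mem_ball_iff_norm.1 hyb
    calc ‖x‖ = ‖y - (y - x)‖ := by congr 1; abel
    _ ≤ ‖y‖ + ‖y - x‖ := norm_sub_le _ _
    _ ≤ (‖p‖ + ‖y - p‖) + RK := by
        have : ‖y‖ ≤ ‖p‖ + ‖y - p‖ := by
          calc ‖y‖ = ‖p + (y - p)‖ := by congr 1; abel
          _ ≤ ‖p‖ + ‖y - p‖ := norm_add_le _ _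
        linarith
    _ ≤ ‖p‖ + R + RK := by linarith
  -- the interior-count bound, in set form
  have hcond2 : ∀ (y : Fin n → ℝ) (S' : Set (Fin n → ℝ)), S'.Finite → S' ⊆ X →
      (∀ x ∈ S', y ∈ interior (T x)) → S'.ncard ≤ k := by
    intro y S' hfin hsubX hintm
    have happ := h2 y hfin.toFinset (by
      intro x hx
      rw [Finset.mem_coe, Set.Finite.mem_toFinset] at hx
      refine ⟨hsubX hx, ?_⟩
      have := hintm x hx
      rw [hTint] at this
      exact this)
    rwa [Set.ncard_eq_toFinset_card _ hfin]
  
  -- frontier membership facts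
  have hfrsub : ∀ x : Fin n → ℝ, frontier (T x) ⊆ T x :=
    fun x => (hTclosed x).frontier_subset
  have hfrnotint : ∀ (x : Fin n → ℝ) (p : Fin n → ℝ), p ∈ frontier (T x) → p ∉ interior (T x) := by
    intro x p hp
    rw [(hTclosed x).frontier_eq] at hp
    exact hp.2
  -- === the density construction ===
  have density : ∀ z ∈ frontier (T a), ∀ ρ : ℝ, 0 < ρ →
      ∃ p x, p ∈ ball z ρ ∧ p ∈ frontier (T a) ∧ x ∈ X ∧ ‖x‖ ≤ ‖a‖ + 2*RK ∧ p ∈ T x ∧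
        ∃ g : (Fin n → ℝ) →L[ℝ] ℝ, g ≠ 0 ∧ (∀ y ∈ T a, g y ≤ g p) ∧ (∀ y ∈ T x, g p ≤ g y) := by
    intro z hz ρ hρ
    set R1 : Set (Fin n → ℝ) := {x ∈ X | (T x ∩ ball z 2).Nonempty} with hR1
    have hR1fin : R1.Finite := hlocfin z 2 (by norm_num)
    set M : (Fin n → ℝ) → Set (Fin n → ℝ) := fun p => {x ∈ R1 | p ∈ T x} with hM
    set J : (Fin n → ℝ) → Set (Fin n → ℝ) := fun p => {x ∈ R1 | p ∈ interior (T x)} with hJ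
    have hMsub : ∀ p, M p ⊆ R1 := fun p x hx => hx.1
    have hMfin : ∀ p, (M p).Finite := fun p => hR1fin.subset (hMsub p)
    have hJfin : ∀ p, (J p).Finite := fun p => hR1fin.subset (fun x hx => hx.1)
    have hJM : ∀ p, J p ⊆ M p := fun p x hx => ⟨hx.1, interior_subset hx.2⟩
    -- "gap" radii around points of the unit ball
    have hgap : ∀ p ∈ ball z 1, ∃ δ : ℝ, 0 < δ ∧ ball p δ ⊆ ball z 1 ∧
        (∀ x ∈ R1, x ∉ M p → ∀ y ∈ ball p δ, y ∉ T x) ∧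
        (∀ x ∈ J p, ball p δ ⊆ interior (T x)) := by
      intro p hp
      have hrad : ∀ x ∈ J p, ∃ r : ℝ, 0 < r ∧ ball p r ⊆ interior (T x) := by
        intro x hx
        obtain ⟨r, hr, hball⟩ := Metric.isOpen_iff.1 isOpen_interior p hx.2
        exact ⟨r, hr, hball⟩
      choose! r hrpos hrball using hrad
      have hgapfun : ∀ x ∈ hR1fin.toFinset, 0 <
          (if x ∈ M p then (if x ∈ J p then r x else 1) else Metric.infDist p (T x)) := by
        intro x hxR
        rw [Set.Finite.mem_toFinset] at hxR
        by_cases hxM : x ∈ M p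
        · by_cases hxJ : x ∈ J p
          · simpa [hxM, hxJ] using hrpos x hxJ
          · simp [hxM, hxJ]
        · have hpT : p ∉ T x := fun h => hxM ⟨hxR, h⟩
          have := (IsClosed.notMem_iff_infDist_pos (hTclosed x) (hTne x)).1 hpT
          simpa [hxM] using this
      obtain ⟨δ0, hδ0, hδ0le⟩ := aux_finset_pos_min hR1fin.toFinset _ hgapfun
      have hpz : dist p z < 1 := mem_ball.1 hp
      refine ⟨min δ0 (1 - dist p z), lt_min hδ0 (by linarith), ?_, ?_, ?_⟩
      · intro y hy
        rw [mem_ball] at hy ⊢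
        have h1' : dist y p < 1 - dist p z := lt_of_lt_of_le hy (min_le_right _ _)
        calc dist y z ≤ dist y p + dist p z := dist_triangle _ _ _
        _ < 1 := by linarith
      · intro x hxR hxM y hy hyT
        have h1' : dist y p < δ0 := lt_of_lt_of_le (mem_ball.1 hy) (min_le_left _ _)
        have h2' : Metric.infDist p (T x) ≤ dist p y := Metric.infDist_le_dist_of_mem hyT
        have h3' := hδ0le x (hR1fin.mem_toFinset.2 hxR)
        rw [if_neg hxM] at h3'
        rw [dist_comm] at h2'
        linarith
      · intro x hxJ y hy
        have h1' : dist y p < δ0 := lt_of_lt_of_le (mem_ball.1 hy) (min_le_left _ _)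
        have h3' := hδ0le x (hR1fin.mem_toFinset.2 (hJM p hxJ).1)
        rw [if_pos (hJM p hxJ), if_pos hxJ] at h3'
        exact hrball x hxJ (mem_ball.2 (by linarith))
    -- every translate covering a point near p belongs to M p
    have hMcov : ∀ p ∈ ball z 1, ∀ δ : ℝ, ball p δ ⊆ ball z 1 →
        (∀ x ∈ R1, x ∉ M p → ∀ y ∈ ball p δ, y ∉ T x) →
        ∀ y ∈ ball p δ, ∀ x ∈ X, y ∈ T x → x ∈ M p := by
      intro p hp δ hball hdisj y hy x hxX hyT
      have hxR : x ∈ R1 := ⟨hxX, ⟨y, hyT, ball_subset_ball (by norm_num) (hball hy)⟩⟩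
      by_contra hxM
      exact hdisj x hxR hxM y hy hyT
    -- choose p₁ minimizing the number of covering translates
    set ρ2 : ℝ := min (ρ/2) (1/2) with hρ2
    have hρ2pos : 0 < ρ2 := lt_min (by linarith) (by norm_num)
    have hρ2half : ρ2 ≤ 1/2 := min_le_right _ _
    have hballz : ball z ρ2 ⊆ ball z 1 := ball_subset_ball (by linarith)
    have hValsne : {m : ℕ | ∃ p, p ∈ frontier (T a) ∧ p ∈ ball z ρ2 ∧ (M p).ncard = m}.Nonempty :=
      ⟨(M z).ncard, z, hz, mem_ball_self hρ2pos, rfl⟩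
    obtain ⟨p₁, hp₁fr, hp₁ball, hp₁card⟩ := Nat.sInf_mem hValsne
    have hmin : ∀ p, p ∈ frontier (T a) → p ∈ ball z ρ2 → (M p₁).ncard ≤ (M p).ncard := by
      intro p hf hb
      rw [hp₁card]
      exact Nat.sInf_le ⟨p, hf, hb, rfl⟩
    obtain ⟨δ₁, hδ₁pos, hδ₁sub, hδ₁disj, hδ₁J⟩ := hgap p₁ (hballz hp₁ball)
    set δ₁' : ℝ := min δ₁ (ρ2 - dist p₁ z) with hδ₁'def
    have hδ₁'pos : 0 < δ₁' := lt_min hδ₁pos (by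
      have := mem_ball.1 hp₁ball; linarith)
    have hδ₁'ballz : ball p₁ δ₁' ⊆ ball z ρ2 := by
      intro y hy
      rw [mem_ball] at hy ⊢
      have h1' : dist y p₁ < ρ2 - dist p₁ z := lt_of_lt_of_le hy (min_le_right _ _)
      calc dist y z ≤ dist y p₁ + dist p₁ z := dist_triangle _ _ _
      _ < ρ2 := by linarith
    have hδ₁'sub : ball p₁ δ₁' ⊆ ball p₁ δ₁ := ball_subset_ball (min_le_left _ _)
    have hMconst1 : ∀ p', p' ∈ frontier (T a) → p' ∈ ball p₁ δ₁' → M p' = M p₁ := by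
      intro p' hf hb
      have hsub : M p' ⊆ M p₁ := by
        intro x hx
        exact hMcov p₁ (hballz hp₁ball) δ₁ hδ₁sub hδ₁disj p' (hδ₁'sub hb) x hx.1.1 hx.2
      exact Set.eq_of_subset_of_ncard_le hsub (hmin p' hf (hδ₁'ballz hb)) (hMfin p₁)
    -- choose pst maximizing the number of interior-covering translates
    have hJValsne : {m : ℕ | ∃ p, p ∈ frontier (T a) ∧ p ∈ ball p₁ δ₁' ∧ (J p).ncard = m}.Nonempty :=
      ⟨(J p₁).ncard, p₁, hp₁fr, mem_ball_self hδ₁'pos, rfl⟩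
    have hJbdd : BddAbove {m : ℕ | ∃ p, p ∈ frontier (T a) ∧ p ∈ ball p₁ δ₁' ∧ (J p).ncard = m} := by
      refine ⟨R1.ncard, ?_⟩
      rintro m ⟨p, hf, hb, rfl⟩
      exact Set.ncard_le_ncard (fun x hx => hx.1) hR1fin
    obtain ⟨pst, hpstfr, hpstball, hpstcard⟩ := Nat.sSup_mem hJValsne hJbdd
    have hmax : ∀ p, p ∈ frontier (T a) → p ∈ ball p₁ δ₁' → (J p).ncard ≤ (J pst).ncard := by
      intro p hf hb
      rw [hpstcard]
      exact le_csSup hJbdd ⟨p, hf, hb, rfl⟩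
    have hpstz1 : pst ∈ ball z 1 := hballz (hδ₁'ballz hpstball)
    obtain ⟨δ₂0, hδ₂0pos, hδ₂0sub, hδ₂0disj, hδ₂0J⟩ := hgap pst hpstz1
    set δ₂ : ℝ := min δ₂0 (δ₁' - dist pst p₁) with hδ₂def
    have hδ₂pos : 0 < δ₂ := lt_min hδ₂0pos (by
      have := mem_ball.1 hpstball; linarith)
    have hδ₂sub1 : ball pst δ₂ ⊆ ball p₁ δ₁' := by
      intro y hy
      rw [mem_ball] at hy ⊢
      have h1' : dist y pst < δ₁' - dist pst p₁ := lt_of_lt_of_le hy (min_le_right _ _)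
      calc dist y p₁ ≤ dist y pst + dist pst p₁ := dist_triangle _ _ _
      _ < δ₁' := by linarith
    have hδ₂sub0 : ball pst δ₂ ⊆ ball pst δ₂0 := ball_subset_ball (min_le_left _ _)
    have hJconst : ∀ p', p' ∈ frontier (T a) → p' ∈ ball pst δ₂ → J p' = J pst := by
      intro p' hf hb
      have hsup : J pst ⊆ J p' := by
        intro x hx
        exact ⟨hx.1, hδ₂0J x hx (hδ₂sub0 hb)⟩
      exact (Set.eq_of_subset_of_ncard_le hsup (hmax p' hf (hδ₂sub1 hb)) (hJfin p')).symm
    have hMconst : ∀ p', p' ∈ frontier (T a) → p' ∈ ball pst δ₂ → M p' = M pst := by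
      intro p' hf hb
      rw [hMconst1 p' hf (hδ₂sub1 hb), hMconst1 pst hpstfr hpstball]
    have hmemM : ∀ q ∈ ball pst δ₂, ∀ x ∈ X, q ∈ T x → x ∈ M pst :=
      fun q hq x hxX hqT =>
        hMcov pst hpstz1 δ₂0 hδ₂0sub hδ₂0disj q (hδ₂sub0 hq) x hxX hqT
    -- basic membership of the base translate
    have hpstA : pst ∈ T a := hfrsub a hpstfr
    have hpstnotint : pst ∉ interior (T a) := hfrnotint a pst hpstfr
    have haR1 : a ∈ R1 := ⟨haX, z, hfrsub a hz, mem_ball_self (by norm_num)⟩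
    have haM : a ∈ M pst := ⟨haR1, hpstA⟩
    have hanotJ : a ∉ J pst := fun h => hpstnotint h.2
    -- interior count bound
    have hjk : (J pst).ncard + 1 ≤ k := by
      have hcl : pst ∈ closure (interior (T a)) := by rw [hclT a]; exact hpstA
      obtain ⟨y', hy'ball, hy'int⟩ := _root_.mem_closure_iff.1 hcl (ball pst δ₂)
        isOpen_ball (mem_ball_self hδ₂pos)
      have happ := hcond2 y' (insert a (J pst)) ((hJfin pst).insert a)
        (by
          rintro x hx
          rcases Set.mem_insert_iff.1 hx with rfl | hx
          · exact haX
          · exact hx.1.1)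
        (by
          rintro x hx
          rcases Set.mem_insert_iff.1 hx with rfl | hx
          · exact hy'int
          · exact hδ₂0J x hx (hδ₂sub0 hy'ball))
      rwa [Set.ncard_insert_of_notMem hanotJ (hJfin pst)] at happ
    set D : Set (Fin n → ℝ) := M pst \ (insert a (J pst)) with hD
    have hDfin : D.Finite := (hMfin pst).subset diff_subset
    have hDJ : ∀ q ∈ ball pst δ₂, q ∉ T a → (∀ x ∈ M pst, q ∉ frontier (T x)) →
        ∃ SD : Finset (Fin n → ℝ), ↑SD ⊆ J pst ∪ D ∧ k ≤ SD.card ∧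
          ∀ x ∈ (SD : Set (Fin n → ℝ)), q ∈ interior (T x) := by
      intro q hq hqA hqfr
      obtain ⟨Sq, hSqsub, hSqcard⟩ := h1 q
      have hmem : ∀ x ∈ (Sq : Set (Fin n → ℝ)), x ∈ M pst ∧ q ∈ interior (T x) ∧ x ≠ a := by
        intro x hx
        have hx' := hSqsub hx
        have hxM : x ∈ M pst := hmemM q hq x hx'.1 hx'.2
        have hqTx : q ∈ T x := hx'.2
        have hqint : q ∈ interior (T x) := by
          by_contra hc
          exact hqfr x hxM (by rw [(hTclosed x).frontier_eq]; exact ⟨hqTx, hc⟩)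
        refine ⟨hxM, hqint, ?_⟩
        rintro rfl
        exact hqA hqTx
      refine ⟨Sq, ?_, hSqcard, fun x hx => (hmem x hx).2.1⟩
      intro x hx
      obtain ⟨hxM, hqint, hxa⟩ := hmem x hx
      by_cases hxJ : x ∈ J pst
      · exact Or.inl hxJ
      · refine Or.inr ⟨hxM, ?_⟩
        intro hc
        rcases Set.mem_insert_iff.1 hc with rfl | hc
        · exact hxa rfl
        · exact hxJ hc
    have hcount : ∀ q ∈ ball pst δ₂, q ∉ T a → (∀ x ∈ M pst, q ∉ frontier (T x)) →
        k ≤ (J pst).ncard + D.ncard := by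
      intro q hq1 hq2 hq3
      obtain ⟨SD, hsub, hcard, _⟩ := hDJ q hq1 hq2 hq3
      calc k ≤ SD.card := hcard
      _ = (SD : Set (Fin n → ℝ)).ncard := (Set.ncard_coe_finset _).symm
      _ ≤ (J pst ∪ D).ncard := Set.ncard_le_ncard hsub ((hJfin pst).union hDfin)
      _ ≤ (J pst).ncard + D.ncard := Set.ncard_union_le _ _
    -- generic exterior points at every scale
    have hgen : ∀ ε : ℝ, 0 < ε → ε ≤ δ₂ →
        ∃ q, (q ∈ ball pst ε ∧ q ∉ T a) ∧ ∀ x ∈ M pst, q ∉ frontier (T x) := by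
      intro ε hε hεle
      have hpstcc : pst ∈ closure ((T a)ᶜ) := by
        rw [closure_compl]
        exact hpstnotint
      obtain ⟨q0, hq0ball, hq0c⟩ := _root_.mem_closure_iff.1 hpstcc (ball pst ε)
        isOpen_ball (mem_ball_self hε)
      have hUopen : IsOpen (ball pst ε ∩ (T a)ᶜ) := isOpen_ball.inter (hTclosed a).isOpen_compl
      obtain ⟨q, hqU, hqF⟩ := aux_open_sub_biUnion_nonempty hUopen ⟨q0, hq0ball, hq0c⟩
        (hMfin pst).toFinset (fun x => frontier (T x))
        (fun x _ => isClosed_frontier)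
        (fun x _ => aux_interior_frontier_closed (hTclosed x))
      refine ⟨q, ⟨hqU.1, hqU.2⟩, ?_⟩
      intro x hx hqfr
      exact hqF (Set.mem_biUnion ((hMfin pst).mem_toFinset.2 hx) hqfr)
    -- the local boundary piece and its flatness
    set P : Set (Fin n → ℝ) := frontier (T a) ∩ ball pst δ₂ with hPdef
    have hpstP : pst ∈ P := ⟨hpstfr, mem_ball_self hδ₂pos⟩
    have hPsubT : ∀ x ∈ M pst, P ⊆ T x := by
      intro x hx p' hp'
      have hMc := hMconst p' hp'.1 hp'.2
      rw [← hMc] at hx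
      exact hx.2
    have hPnotint : ∀ x, x ∈ M pst → x ∉ insert a (J pst) → ∀ p' ∈ P, p' ∉ interior (T x) := by
      intro x hxM hxn p' hp' hint'
      have hJc := hJconst p' hp'.1 hp'.2
      have hxJ : x ∈ J p' := ⟨hxM.1, hint'⟩
      rw [hJc] at hxJ
      exact hxn (Set.mem_insert_of_mem a hxJ)
    have hspan : affineSpan ℝ P ≠ ⊤ := by
      intro htop
      have hconvP : (interior (convexHull ℝ P)).Nonempty := by
        rw [Convex.interior_nonempty_iff_affineSpan_eq_top (convex_convexHull ℝ P),
          affineSpan_convexHull]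
        exact htop
      obtain ⟨y, hy⟩ := hconvP
      have hyint : ∀ x ∈ M pst, y ∈ interior (T x) := by
        intro x hx
        have h5 : convexHull ℝ P ⊆ T x := convexHull_min (hPsubT x hx) (hTconv x)
        exact interior_mono h5 hy
      have hle := hcond2 y (M pst) (hMfin pst) (fun x hx => hx.1.1) hyint
      obtain ⟨q, ⟨hq1, hq2⟩, hq3⟩ := hgen δ₂ hδ₂pos (le_refl _)
      have hck := hcount q hq1 hq2 hq3
      have hsub2 : insert a (J pst ∪ D) ⊆ M pst := by
        rintro x hx
        rcases Set.mem_insert_iff.1 hx with rfl | hx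
        · exact haM
        · rcases hx with hx | hx
          · exact hJM pst hx
          · exact hx.1
      have e1 : (insert a (J pst ∪ D)).ncard = (J pst ∪ D).ncard + 1 :=
        Set.ncard_insert_of_notMem (by
          rintro (hx | hx)
          · exact hanotJ hx
          · exact hx.2 (Set.mem_insert a _)) ((hJfin pst).union hDfin)
      have e2 : (J pst ∪ D).ncard = (J pst).ncard + D.ncard :=
        Set.ncard_union_eq (by
          rw [Set.disjoint_left]
          intro x hx hxD
          exact hxD.2 (Set.mem_insert_of_mem a hx)) (hJfin pst) hDfin
      have e3 := Set.ncard_le_ncard hsub2 (hMfin pst)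
      rw [e1, e2] at e3
      omega
    -- a hyperplane functional containing the flat piece P
    obtain ⟨g, hg0, hgP⟩ : ∃ g : (Fin n → ℝ) →L[ℝ] ℝ, g ≠ 0 ∧ ∀ p' ∈ P, g p' = g pst := by
      have hWne : ((affineSpan ℝ P : AffineSubspace ℝ (Fin n → ℝ)) : Set (Fin n → ℝ)).Nonempty :=
        ⟨pst, subset_affineSpan ℝ P hpstP⟩
      have hWdir : (affineSpan ℝ P).direction ≠ ⊤ := by
        intro h
        exact hspan ((AffineSubspace.direction_eq_top_iff_of_nonempty hWne).1 h)
      obtain ⟨v, hv⟩ : ∃ v, v ∉ (affineSpan ℝ P).direction := by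
        by_contra h
        push_neg at h
        exact hWdir (Submodule.eq_top_iff'.2 h)
      have hqvne : Submodule.Quotient.mk (p := (affineSpan ℝ P).direction) v ≠ 0 := by
        rw [Ne, Submodule.Quotient.mk_eq_zero]
        exact hv
      obtain ⟨φ, hφ⟩ : ∃ φ : Module.Dual ℝ ((Fin n → ℝ) ⧸ (affineSpan ℝ P).direction),
          φ (Submodule.Quotient.mk v) ≠ 0 := by
        by_contra h
        push_neg at h
        exact hqvne ((Module.forall_dual_apply_eq_zero_iff ℝ _).1 h)
      set glin : (Fin n → ℝ) →ₗ[ℝ] ℝ := φ.comp (affineSpan ℝ P).direction.mkQ with hglin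
      refine ⟨LinearMap.toContinuousLinearMap glin, ?_, ?_⟩
      · intro h
        apply hφ
        have h2' : glin v = 0 := by
          have h3' := congrArg (fun F : (Fin n → ℝ) →L[ℝ] ℝ => F v) h
          simpa [LinearMap.coe_toContinuousLinearMap'] using h3'
        simpa [hglin] using h2'
      · intro p' hp'
        have hmemdir : p' - pst ∈ (affineSpan ℝ P).direction := by
          have := AffineSubspace.vsub_mem_direction (subset_affineSpan ℝ P hp')
            (subset_affineSpan ℝ P hpstP)
          simpa using this
        have h0 : glin (p' - pst) = 0 := by
          have : ((affineSpan ℝ P).direction.mkQ) (p' - pst) = 0 := by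
            rw [Submodule.mkQ_apply]
            exact (Submodule.Quotient.mk_eq_zero _).2 hmemdir
          simp [hglin, LinearMap.comp_apply, this]
        have h1' : glin p' - glin pst = 0 := by rw [← map_sub]; exact h0
        show (LinearMap.toContinuousLinearMap glin) p' = (LinearMap.toContinuousLinearMap glin) pst
        simp only [LinearMap.coe_toContinuousLinearMap']
        linarith
    -- an interior point of T a near pst with different g-value
    obtain ⟨y₀, hy₀int, hy₀ball, hy₀g⟩ : ∃ y₀, y₀ ∈ interior (T a) ∧
        y₀ ∈ ball pst (δ₂/2) ∧ g y₀ ≠ g pst := by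
      have hcl : pst ∈ closure (interior (T a)) := by rw [hclT a]; exact hpstA
      obtain ⟨y₁, hy₁ball, hy₁int⟩ := _root_.mem_closure_iff.1 hcl (ball pst (δ₂/2)) isOpen_ball
        (mem_ball_self (by linarith))
      by_cases hgy₁ : g y₁ = g pst
      · obtain ⟨v, hv⟩ : ∃ v, g v ≠ 0 := by
          by_contra h
          push_neg at h
          exact hg0 (by ext u; simpa using h u)
        obtain ⟨r₁, hr₁pos, hr₁sub⟩ := Metric.isOpen_iff.1 isOpen_interior y₁ hy₁int
        have hvn : (0:ℝ) < ‖v‖ := norm_pos_iff.2 (fun hv0 => hv (by rw [hv0, map_zero]))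
        set ε₁ : ℝ := min r₁ (δ₂/2 - dist y₁ pst) with hε₁
        have hε₁pos : 0 < ε₁ := lt_min hr₁pos (by
          have := mem_ball.1 hy₁ball; linarith)
        have hdy : dist (y₁ + (ε₁ / (2*‖v‖)) • v) y₁ = ε₁/2 := by
          rw [dist_eq_norm]
          have h3 : y₁ + (ε₁ / (2*‖v‖)) • v - y₁ = (ε₁ / (2*‖v‖)) • v := by abel
          rw [h3, norm_smul, Real.norm_eq_abs, abs_of_pos (by positivity)]
          field_simp
        refine ⟨y₁ + (ε₁ / (2*‖v‖)) • v, ?_, ?_, ?_⟩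
        · refine hr₁sub (mem_ball.2 ?_)
          rw [hdy]
          have : ε₁ ≤ r₁ := min_le_left _ _
          linarith
        · rw [mem_ball]
          have h4 := mem_ball.1 hy₁ball
          have h5 : ε₁ ≤ δ₂/2 - dist y₁ pst := min_le_right _ _
          calc dist (y₁ + (ε₁ / (2*‖v‖)) • v) pst
              ≤ dist (y₁ + (ε₁ / (2*‖v‖)) • v) y₁ + dist y₁ pst := dist_triangle _ _ _
          _ = ε₁/2 + dist y₁ pst := by rw [hdy]
          _ < δ₂/2 := by linarith
        · have hval : g (y₁ + (ε₁ / (2*‖v‖)) • v) = g y₁ + (ε₁ / (2*‖v‖)) * g v := by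
            simp [map_add, map_smul, smul_eq_mul]
          rw [hval, hgy₁]
          intro hcon
          have hzero : (ε₁ / (2*‖v‖)) * g v = 0 := by linarith
          rcases mul_eq_zero.1 hzero with h | h
          · have : (0:ℝ) < ε₁/(2*‖v‖) := by positivity
            linarith
          · exact hv h
      · exact ⟨y₁, hy₁int, hy₁ball, hgy₁⟩
    -- the g-level slice of the ball lies inside T a
    have hWball : ∀ w, w ∈ ball pst δ₂ → g w = g pst → w ∈ T a := by
      intro w hw hgw
      by_contra hwA
      have hy₀A : y₀ ∈ T a := interior_subset hy₀int
      set φt : ℝ → (Fin n → ℝ) := fun t => y₀ + t • (w - y₀) with hφt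
      have hcont : Continuous φt := by
        exact continuous_const.add (continuous_id.smul continuous_const)
      set Sset : Set ℝ := {t | t ∈ Set.Icc (0:ℝ) 1 ∧ φt t ∈ T a} with hSset
      have hSne : Sset.Nonempty := ⟨0, ⟨le_refl _, zero_le_one⟩, by
        have : φt 0 = y₀ := by simp [hφt]
        rw [this]; exact hy₀A⟩
      have hSbdd : BddAbove Sset := ⟨1, fun t ht => ht.1.2⟩
      have hSclosed : IsClosed Sset := by
        have : Sset = Set.Icc (0:ℝ) 1 ∩ φt ⁻¹' (T a) := rfl
        rw [this]
        exact isClosed_Icc.inter ((hTclosed a).preimage hcont)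
      have htmem : sSup Sset ∈ Sset := hSclosed.csSup_mem hSne hSbdd
      set t₀ := sSup Sset with ht₀
      have hζA : φt t₀ ∈ T a := htmem.2
      have hφ1 : φt 1 = w := by
        show y₀ + (1:ℝ) • (w - y₀) = w
        simp
      have ht₀1 : t₀ ≠ 1 := by
        intro h
        rw [h, hφ1] at hζA
        exact hwA hζA
      have ht₀lt : t₀ < 1 := lt_of_le_of_ne htmem.1.2 ht₀1
      have ht₀0 : 0 ≤ t₀ := htmem.1.1
      have hζnotint : φt t₀ ∉ interior (T a) := by
        intro hint'
        have hev : ∀ᶠ t in nhds t₀, φt t ∈ interior (T a) :=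
          (hcont.tendsto t₀).eventually (isOpen_interior.eventually_mem hint')
        obtain ⟨ε₂, hε₂pos, hε₂⟩ := Metric.eventually_nhds_iff.1 hev
        set t₁ : ℝ := min 1 (t₀ + ε₂/2) with ht₁
        have ht₁gt : t₀ < t₁ := lt_min ht₀lt (by linarith)
        have ht₁le : t₁ ≤ t₀ + ε₂/2 := min_le_right _ _
        have ht₁mem : t₁ ∈ Sset := by
          refine ⟨⟨by linarith, min_le_left _ _⟩, ?_⟩
          refine interior_subset (hε₂ ?_)
          rw [Real.dist_eq, abs_of_pos (by linarith)]
          linarith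
        have := le_csSup hSbdd ht₁mem
        linarith
      have hζfr : φt t₀ ∈ frontier (T a) := by
        rw [(hTclosed a).frontier_eq]
        exact ⟨hζA, hζnotint⟩
      have hζball : φt t₀ ∈ ball pst δ₂ := by
        have hy₀b2 : y₀ ∈ ball pst δ₂ := ball_subset_ball (by linarith) hy₀ball
        have hcomb : φt t₀ = (1 - t₀) • y₀ + t₀ • w := by
          show y₀ + t₀ • (w - y₀) = (1 - t₀) • y₀ + t₀ • w
          module
        rw [hcomb]
        exact (convex_ball pst δ₂) hy₀b2 hw (by linarith) ht₀0 (by ring)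
      have hgζ : g (φt t₀) = g pst := hgP _ ⟨hζfr, hζball⟩
      have hexp : g (φt t₀) = g y₀ + t₀ * (g w - g y₀) := by
        show g (y₀ + t₀ • (w - y₀)) = g y₀ + t₀ * (g w - g y₀)
        simp [map_add, map_smul, map_sub, smul_eq_mul]
      rw [hgζ, hgw] at hexp
      have hzero : (1 - t₀) * (g y₀ - g pst) = 0 := by linarith
      rcases mul_eq_zero.1 hzero with h | h
      · exact ht₀1 (by linarith)
      · exact hy₀g (by linarith)
    -- supporting functional of T a at pst
    obtain ⟨f₁, hf₁⟩ := geometric_hahn_banach_open_point ((hTconv a).interior)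
      isOpen_interior hpstnotint
    have hf₁A : ∀ y ∈ T a, f₁ y ≤ f₁ pst := by
      intro y hy
      have h3 : y ∈ closure (interior (T a)) := by rw [hclT a]; exact hy
      exact closure_minimal (fun u hu => (hf₁ u hu).le)
        (isClosed_le f₁.continuous continuous_const) h3
    have hf₁0 : f₁ ≠ 0 := by
      intro h
      obtain ⟨u, hu⟩ := hTintne a
      have := hf₁ u hu
      rw [h] at this
      simp at this
    have hker₁ : ∀ dv : Fin n → ℝ, g dv = 0 → f₁ dv = 0 := by
      intro dv hdv
      have hsm : ∀ s : ℝ, |s| * ‖dv‖ < δ₂ → pst + s • dv ∈ T a := by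
        intro s hs
        refine hWball _ (mem_ball.2 ?_) ?_
        · rw [dist_eq_norm]
          have h9 : pst + s • dv - pst = s • dv := by abel
          rw [h9, norm_smul, Real.norm_eq_abs]
          exact hs
        · simp [map_add, map_smul, smul_eq_mul, hdv]
      set s₀ : ℝ := δ₂ / (2 * (‖dv‖ + 1)) with hs₀
      have hs₀pos : 0 < s₀ := by positivity
      have hbound : |s₀| * ‖dv‖ < δ₂ := by
        rw [abs_of_pos hs₀pos]
        have h5 : s₀ * ‖dv‖ < s₀ * (2 * (‖dv‖ + 1)) := by
          apply mul_lt_mul_of_pos_left ?_ hs₀pos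
          nlinarith [norm_nonneg dv]
        have h6 : s₀ * (2 * (‖dv‖ + 1)) = δ₂ := by rw [hs₀]; field_simp
        linarith
      have hp1 := hf₁A _ (hsm s₀ hbound)
      have hp2 := hf₁A _ (hsm (-s₀) (by rwa [abs_neg]))
      simp only [map_add, map_smul, smul_eq_mul] at hp1 hp2
      have q1 : s₀ * f₁ dv ≤ 0 := by linarith
      have q2 : 0 ≤ s₀ * f₁ dv := by nlinarith
      rcases mul_eq_zero.1 (le_antisymm q1 q2) with h | h
      · exact absurd h hs₀pos.ne'
      · exact h
    have hprop : ∀ φ : (Fin n → ℝ) →L[ℝ] ℝ, (∀ dv, g dv = 0 → φ dv = 0) →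
        ∃ cc : ℝ, ∀ u, φ u = cc * g u := by
      intro φ hφ
      obtain ⟨v₁, hv₁⟩ : ∃ v₁, g v₁ ≠ 0 := by
        by_contra h
        push_neg at h
        exact hg0 (by ext u; simpa using h u)
      refine ⟨φ v₁ / g v₁, fun u => ?_⟩
      have hu : g (u - (g u / g v₁) • v₁) = 0 := by
        simp only [map_sub, map_smul, smul_eq_mul]
        field_simp
        ring
      have h7 := hφ _ hu
      simp only [map_sub, map_smul, smul_eq_mul] at h7
      have h8 : φ u = (g u / g v₁) * φ v₁ := by linarith
      rw [h8]; ring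
    obtain ⟨c₁, hc₁⟩ := hprop f₁ hker₁
    have hc₁0 : c₁ ≠ 0 := by
      intro h
      apply hf₁0
      ext u
      simp [hc₁ u, h]
    -- a generic exterior point on the positive side of f₁
    obtain ⟨v₂, hv₂⟩ : ∃ v₂, 0 < f₁ v₂ := by
      obtain ⟨v, hv⟩ : ∃ v, f₁ v ≠ 0 := by
        by_contra h
        push_neg at h
        exact hf₁0 (by ext u; simpa using h u)
      rcases hv.lt_or_gt with h | h
      · refine ⟨-v, ?_⟩
        rw [map_neg]
        linarith
      · exact ⟨v, h⟩
    have hUne : (ball pst δ₂ ∩ {u | f₁ pst < f₁ u}).Nonempty := by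
      set sε : ℝ := δ₂ / (2 * (‖v₂‖ + 1)) with hsε
      have hsεpos : 0 < sε := by positivity
      refine ⟨pst + sε • v₂, mem_ball.2 ?_, ?_⟩
      · rw [dist_eq_norm]
        have h9 : pst + sε • v₂ - pst = sε • v₂ := by abel
        rw [h9, norm_smul, Real.norm_eq_abs, abs_of_pos hsεpos]
        have h5 : sε * ‖v₂‖ < sε * (2 * (‖v₂‖ + 1)) := by
          apply mul_lt_mul_of_pos_left ?_ hsεpos
          nlinarith [norm_nonneg v₂]
        have h6 : sε * (2 * (‖v₂‖ + 1)) = δ₂ := by rw [hsε]; field_simp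
        linarith
      · show f₁ pst < f₁ (pst + sε • v₂)
        simp only [map_add, map_smul, smul_eq_mul]
        nlinarith
    have hUopen : IsOpen (ball pst δ₂ ∩ {u | f₁ pst < f₁ u}) :=
      isOpen_ball.inter (isOpen_lt continuous_const f₁.continuous)
    obtain ⟨q', hq'U, hq'F⟩ := aux_open_sub_biUnion_nonempty hUopen hUne
      (hMfin pst).toFinset (fun x => frontier (T x)) (fun x _ => isClosed_frontier)
      (fun x _ => aux_interior_frontier_closed (hTclosed x))
    have hq'ball : q' ∈ ball pst δ₂ := hq'U.1
    have hq'gt : f₁ pst < f₁ q' := hq'U.2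
    have hq'A : q' ∉ T a := fun h => absurd (hf₁A q' h) (not_le.2 hq'gt)
    have hq'fr : ∀ x ∈ M pst, q' ∉ frontier (T x) := by
      intro x hx hqfr
      exact hq'F (Set.mem_biUnion ((hMfin pst).mem_toFinset.2 hx) hqfr)
    obtain ⟨SD, hSDsub, hSDcard, hSDint⟩ := hDJ q' hq'ball hq'A hq'fr
    obtain ⟨xh, hxhSD, hxhD⟩ : ∃ xh ∈ SD, (xh : Fin n → ℝ) ∈ D := by
      by_contra h
      push_neg at h
      have hsubJ : (SD : Set (Fin n → ℝ)) ⊆ J pst := by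
        intro x hx
        rcases hSDsub hx with hx' | hx'
        · exact hx'
        · exact absurd hx' (h x hx)
      have h11 := Set.ncard_le_ncard hsubJ (hJfin pst)
      rw [Set.ncard_coe_finset] at h11
      omega
    have hxhM : xh ∈ M pst := hxhD.1
    have hxhX : xh ∈ X := hxhM.1.1
    have hq'int : q' ∈ interior (T xh) := hSDint xh hxhSD
    have hxhTpst : pst ∈ T xh := hxhM.2
    have hxhnotint : pst ∉ interior (T xh) := by
      intro h
      exact hxhD.2 (Set.mem_insert_of_mem a ⟨hxhM.1, h⟩)
    obtain ⟨f₂, hf₂⟩ := geometric_hahn_banach_open_point ((hTconv xh).interior)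
      isOpen_interior hxhnotint
    have hf₂B : ∀ y ∈ T xh, f₂ y ≤ f₂ pst := by
      intro y hy
      have h3 : y ∈ closure (interior (T xh)) := by rw [hclT xh]; exact hy
      exact closure_minimal (fun u hu => (hf₂ u hu).le)
        (isClosed_le f₂.continuous continuous_const) h3
    have hf₂0 : f₂ ≠ 0 := by
      intro h
      obtain ⟨u, hu⟩ := hTintne xh
      have := hf₂ u hu
      rw [h] at this
      simp at this
    have hker₂ : ∀ dv : Fin n → ℝ, g dv = 0 → f₂ dv = 0 := by
      intro dv hdv
      have hsm : ∀ s : ℝ, |s| * ‖dv‖ < δ₂ → pst + s • dv ∈ T xh := by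
        intro s hs
        have hball' : pst + s • dv ∈ ball pst δ₂ := by
          rw [mem_ball, dist_eq_norm]
          have h9 : pst + s • dv - pst = s • dv := by abel
          rw [h9, norm_smul, Real.norm_eq_abs]
          exact hs
        have hgz : g (pst + s • dv) = g pst := by
          simp [map_add, map_smul, smul_eq_mul, hdv]
        have hTa' : pst + s • dv ∈ T a := hWball _ hball' hgz
        have hf₁eq : f₁ (pst + s • dv) = f₁ pst := by
          rw [hc₁ (pst + s • dv), hc₁ pst, hgz]
        have hnotint' : pst + s • dv ∉ interior (T a) := by
          intro h
          exact absurd hf₁eq (ne_of_lt (hf₁ _ h))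
        have hfr' : pst + s • dv ∈ frontier (T a) := by
          rw [(hTclosed a).frontier_eq]
          exact ⟨hTa', hnotint'⟩
        exact hPsubT xh hxhM ⟨hfr', hball'⟩
      set s₀ : ℝ := δ₂ / (2 * (‖dv‖ + 1)) with hs₀
      have hs₀pos : 0 < s₀ := by positivity
      have hbound : |s₀| * ‖dv‖ < δ₂ := by
        rw [abs_of_pos hs₀pos]
        have h5 : s₀ * ‖dv‖ < s₀ * (2 * (‖dv‖ + 1)) := by
          apply mul_lt_mul_of_pos_left ?_ hs₀pos
          nlinarith [norm_nonneg dv]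
        have h6 : s₀ * (2 * (‖dv‖ + 1)) = δ₂ := by rw [hs₀]; field_simp
        linarith
      have hp1 := hf₂B _ (hsm s₀ hbound)
      have hp2 := hf₂B _ (hsm (-s₀) (by rwa [abs_neg]))
      simp only [map_add, map_smul, smul_eq_mul] at hp1 hp2
      have q1 : s₀ * f₂ dv ≤ 0 := by linarith
      have q2 : 0 ≤ s₀ * f₂ dv := by nlinarith
      rcases mul_eq_zero.1 (le_antisymm q1 q2) with h | h
      · exact absurd h hs₀pos.ne'
      · exact h
    obtain ⟨c₂, hc₂⟩ := hprop f₂ hker₂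
    have hc₂0 : c₂ ≠ 0 := by
      intro h
      apply hf₂0
      ext u
      simp [hc₂ u, h]
    refine ⟨pst, xh, ?_, hpstfr, hxhX, ?_, hxhTpst, f₁, hf₁0, hf₁A, ?_⟩
    · have h8 : pst ∈ ball z ρ2 := hδ₁'ballz hpstball
      exact ball_subset_ball (le_trans (min_le_left _ _) (by linarith)) h8
    · have h9 : ‖pst - xh‖ ≤ RK := hRK _ hxhTpst
      have h10 : ‖pst - a‖ ≤ RK := hRK _ hpstA
      calc ‖xh‖ = ‖a + (pst - a) - (pst - xh)‖ := by congr 1; abel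
      _ ≤ ‖a + (pst - a)‖ + ‖pst - xh‖ := norm_sub_le _ _
      _ ≤ (‖a‖ + ‖pst - a‖) + RK := by
          have := norm_add_le a (pst - a)
          linarith
      _ ≤ ‖a‖ + 2*RK := by linarith
    · intro y hy
      have hy2 := hf₂B y hy
      have e1 : f₁ q' - f₁ pst = c₁ * (g q' - g pst) := by rw [hc₁ q', hc₁ pst]; ring
      have e2 : f₂ q' - f₂ pst = c₂ * (g q' - g pst) := by rw [hc₂ q', hc₂ pst]; ring
      have e3 : f₂ y - f₂ pst = c₂ * (g y - g pst) := by rw [hc₂ y, hc₂ pst]; ring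
      have e4 : f₁ y - f₁ pst = c₁ * (g y - g pst) := by rw [hc₁ y, hc₁ pst]; ring
      have s1 : 0 < c₁ * (g q' - g pst) := by rw [← e1]; linarith
      have s2 : c₂ * (g q' - g pst) < 0 := by
        rw [← e2]
        have := hf₂ q' hq'int
        linarith
      have s3 : c₂ * (g y - g pst) ≤ 0 := by rw [← e3]; linarith
      have key : (c₁ * (g y - g pst)) * (c₂ * (g q' - g pst)) =
          (c₁ * (g q' - g pst)) * (c₂ * (g y - g pst)) := by ring
      by_contra hcon
      push_neg at hcon
      have s4 : c₁ * (g y - g pst) < 0 := by rw [← e4]; linarith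
      have s5 : 0 < (c₁ * (g y - g pst)) * (c₂ * (g q' - g pst)) :=
        mul_pos_of_neg_of_neg s4 s2
      have s6 : (c₁ * (g q' - g pst)) * (c₂ * (g y - g pst)) ≤ 0 := by nlinarith
      rw [key] at s5
      linarith
  -- === assemble: the frontier of T a lies in finitely many hyperplanes ===
  set G : (Fin n → ℝ) → Set (Fin n → ℝ) := fun x =>
    {p | p ∈ frontier (T a) ∧ p ∈ T x ∧ ∃ gf : (Fin n → ℝ) →L[ℝ] ℝ, gf ≠ 0 ∧
      (∀ y ∈ T a, gf y ≤ gf p) ∧ (∀ y ∈ T x, gf p ≤ gf y)} with hG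
  have hsel : ∀ x : Fin n → ℝ, ∃ (p : Fin n → ℝ) (gf : (Fin n → ℝ) →L[ℝ] ℝ),
      (G x).Nonempty → (p ∈ frontier (T a) ∧ p ∈ T x ∧ gf ≠ 0 ∧
        (∀ y ∈ T a, gf y ≤ gf p) ∧ (∀ y ∈ T x, gf p ≤ gf y)) := by
    intro x
    by_cases h : (G x).Nonempty
    · obtain ⟨p, hp⟩ := h
      obtain ⟨gf, hgf⟩ := hp.2.2
      exact ⟨p, gf, fun _ => ⟨hp.1, hp.2.1, hgf.1, hgf.2.1, hgf.2.2⟩⟩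
    · exact ⟨0, 0, fun hn => absurd hn h⟩
  choose p₀ f₀ hp₀ using hsel
  have hGflat : ∀ x, (G x).Nonempty → ∀ q ∈ G x, f₀ x q = f₀ x (p₀ x) := by
    intro x hne q hq
    obtain ⟨hp1, hp2, hp3, hp4, hp5⟩ := hp₀ x hne
    have hqA : q ∈ T a := hfrsub a hq.1
    have hle := hp4 q hqA
    have hge := hp5 q hq.2.1
    linarith
  set FS : Finset (Fin n → ℝ) := ((hdisc (‖a‖ + 2*RK)).toFinset.filter
    (fun x => (G x).Nonempty)) with hFS
  have hcover : frontier (T a) ⊆ ⋃ x ∈ FS, {y | f₀ x y = f₀ x (p₀ x)} := by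
    intro z hz
    have hclosedU : IsClosed (⋃ x ∈ FS, {y : Fin n → ℝ | f₀ x y = f₀ x (p₀ x)}) := by
      apply Set.Finite.isClosed_biUnion FS.finite_toSet
      intro x _
      exact isClosed_eq (f₀ x).continuous continuous_const
    rw [← hclosedU.closure_eq, _root_.mem_closure_iff]
    intro o ho hzo
    obtain ⟨ρ, hρpos, hρsub⟩ := Metric.isOpen_iff.1 ho z hzo
    obtain ⟨p, x, hpball, hpfr, hxX, hxnorm, hpT, gf, hgf0, hgfA, hgfB⟩ :=
      density z hz ρ hρpos
    have hpG : p ∈ G x := ⟨hpfr, hpT, gf, hgf0, hgfA, hgfB⟩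
    have hxFS : x ∈ FS := by
      rw [hFS, Finset.mem_filter]
      exact ⟨(hdisc _).mem_toFinset.2 ⟨hxX, hxnorm⟩, ⟨p, hpG⟩⟩
    exact ⟨p, hρsub hpball, Set.mem_biUnion hxFS (hGflat x ⟨p, hpG⟩ p hpG)⟩
  have hf₀0 : ∀ x ∈ FS, f₀ x ≠ 0 := by
    intro x hx
    rw [hFS, Finset.mem_filter] at hx
    exact (hp₀ x hx.2).2.2.1
  obtain ⟨V, hV⟩ := aux_polytope (hTconv a) (hTcompact a) (hTintne a) FS f₀
    (fun x => f₀ x (p₀ x)) hf₀0 (hclT a) hcover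
  -- translate back to K
  set tr : (Fin n → ℝ) →ᵃ[ℝ] (Fin n → ℝ) :=
    { toFun := fun y => y + -a
      linear := LinearMap.id
      map_vadd' := by
        intro p v
        show (v +ᵥ p) + -a = (LinearMap.id (R := ℝ) v) +ᵥ (p + -a)
        simp only [vadd_eq_add, LinearMap.id_apply]
        abel } with htr
  have hKT : K = tr '' (T a) := by
    ext u
    constructor
    · intro hu
      refine ⟨u + a, ?_, ?_⟩
      · show u + a - a ∈ K
        simpa using hu
      · show u + a + -a = u
        abel
    · rintro ⟨y, hy, rfl⟩
      show y + -a ∈ K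
      rw [← sub_eq_add_neg]
      exact hy
  have htrcoe : ⇑tr = fun y : Fin n → ℝ => y - a := by
    funext y
    show y + -a = y - a
    rw [sub_eq_add_neg]
  refine ⟨V.image (fun y => y - a), ?_⟩
  rw [hKT, hV, tr.image_convexHull]
  congr 1
  rw [Finset.coe_image, htrcoe]
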